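/- For 0 < ν ≤ 1/10, with V(x) = x⁴/4 − x³/3 + ν(x − x²/2), one has V(1) < V(−√ν); moreover x = 1 is the unique strict global minimizer of V on ℝ, i.e. V(x) > V(1) for all x ≠ 1. Hence the active state x_A = 1 is a deeper potential well than the quiescent state x_Q = −√ν (asymmetric bistability). -/
import Mathlib

/-- The single-node potential `V(x) = x⁴/4 - x³/3 + ν(x - x²/2)`. -/
noncomputable def V (ν x : ℝ) : ℝ := x ^ 4 / 4 - x ^ 3 / 3 + ν * (x - x ^ 2 / 2)

/-- For `0 < ν ≤ 1/10` one has `V(1) < V(-√ν)`, and `x = 1` is the unique strict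
global minimizer of `V` on `ℝ`: the active state is a deeper well than the
quiescent state (asymmetric bistability). -/
theorem active_state_deeper {ν : ℝ} (hν0 : 0 < ν) (hν1 : ν ≤ 1 / 10) :
    V ν 1 < V ν (-Real.sqrt ν) ∧ ∀ x : ℝ, x ≠ 1 → V ν 1 < V ν x := by
  have key : ∀ x : ℝ, x ≠ 1 → V ν 1 < V ν x := by
    intro x hx
    have hx' : x - 1 ≠ 0 := sub_ne_zero.mpr hx
    have h1 : (x - 1) ^ 2 > 0 := by positivity
    have h2 : (0:ℝ) < 2/3 - 6*ν := by linarith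
    simp only [V]
    nlinarith [sq_nonneg ((x - 1) * (3 * x + 1)), mul_pos h1 h2]
  refine ⟨key _ ?_, key⟩
  intro h
  have h2 : Real.sqrt ν = -1 := by linarith
  linarith [Real.sqrt_nonneg ν, h2]
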